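/- Let x₁, x₂, x₃ be real numbers with x₁ + x₂ + x₃ = 0, x₁ > x₂ > x₃ and x₁ − x₃ < π/2. Then the three equations cot(2(x₁−x₂)) + cot(2(x₁−x₃)) = 0, cot(2(x₂−x₁)) + cot(2(x₂−x₃)) = 0 and cot(2(x₃−x₁)) + cot(2(x₃−x₂)) = 0 hold simultaneously if and only if (x₁, x₂, x₃) = (π/6, 0, −π/6). -/

import Mathlib

open Real

lemma real_cot_eq (x : ℝ) : Real.cot x = Real.cos x / Real.sin x :=
  Real.cot_eq_cos_div_sin x

lemma cot_add_cot {x y : ℝ} (hx : Real.sin x ≠ 0) (hy : Real.sin y ≠ 0) :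
    Real.cot x + Real.cot y = Real.sin (x + y) / (Real.sin x * Real.sin y) := by
  rw [real_cot_eq, real_cot_eq, Real.sin_add]
  field_simp
  ring

lemma cot_neg' (x : ℝ) : Real.cot (-x) = -Real.cot x := by
  rw [real_cot_eq, real_cot_eq, Real.sin_neg, Real.cos_neg, div_neg]

/-- For `x₁ + x₂ + x₃ = 0`, `x₁ > x₂ > x₃`, `x₁ - x₃ < π/2`, the system
`∑_{j ≠ i} cot(2(x_i - x_j)) = 0` (i = 1,2,3) holds iff `(x₁,x₂,x₃) = (π/6, 0, -π/6)`. -/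
theorem stmt_8 (x₁ x₂ x₃ : ℝ) (hsum : x₁ + x₂ + x₃ = 0)
    (h12 : x₂ < x₁) (h23 : x₃ < x₂) (h13 : x₁ - x₃ < π / 2) :
    (Real.cot (2 * (x₁ - x₂)) + Real.cot (2 * (x₁ - x₃)) = 0 ∧
     Real.cot (2 * (x₂ - x₁)) + Real.cot (2 * (x₂ - x₃)) = 0 ∧
     Real.cot (2 * (x₃ - x₁)) + Real.cot (2 * (x₃ - x₂)) = 0) ↔
    (x₁ = π / 6 ∧ x₂ = 0 ∧ x₃ = -(π / 6)) := by
  have hpi := Real.pi_pos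
  set a := x₁ - x₂ with ha_def
  set b := x₂ - x₃ with hb_def
  have ha : 0 < a := by simp [ha_def]; linarith
  have hb : 0 < b := by simp [hb_def]; linarith
  have hab : a + b < π / 2 := by simp [ha_def, hb_def]; linarith
  have hsa : 0 < Real.sin (2 * a) :=
    Real.sin_pos_of_pos_of_lt_pi (by linarith) (by linarith)
  have hsb : 0 < Real.sin (2 * b) :=
    Real.sin_pos_of_pos_of_lt_pi (by linarith) (by linarith)
  have hsab : 0 < Real.sin (2 * (a + b)) :=
    Real.sin_pos_of_pos_of_lt_pi (by linarith) (by linarith)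
  constructor
  · rintro ⟨e1, e2, e3⟩
    -- e2 : cot(-2a) + cot(2b) = 0, i.e. cot 2b = cot 2a
    have h2ab : 2 * (x₂ - x₁) = -(2 * a) := by rw [ha_def]; ring
    rw [h2ab, cot_neg'] at e2
    -- so cot 2a = cot 2b, hence sin(2a - 2b) = 0
    have hdiff : Real.sin (2 * a - 2 * b) = 0 := by
      have : Real.cos (2 * a) * Real.sin (2 * b) - Real.cos (2 * b) * Real.sin (2 * a) = 0 := by
        have h := e2
        rw [real_cot_eq, real_cot_eq] at h
        field_simp at h
        linarith
      rw [Real.sin_sub]; linarith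
    have haeb : a = b := by
      have := (Real.sin_eq_zero_iff_of_lt_of_lt (x := 2 * a - 2 * b)
        (by linarith) (by linarith)).1 hdiff
      linarith
    -- e1 : cot(2a) + cot(2(a+b)) = 0  with a = b gives sin(6a) = 0
    have h1ab : 2 * (x₁ - x₃) = 2 * (a + b) := by rw [ha_def, hb_def]; ring
    rw [h1ab, cot_add_cot (ne_of_gt hsa) (ne_of_gt hsab)] at e1
    have hsin6 : Real.sin (2 * a + 2 * (a + b)) = 0 := by
      have hne : Real.sin (2 * a) * Real.sin (2 * (a + b)) ≠ 0 :=
        ne_of_gt (mul_pos hsa hsab)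
      field_simp at e1
      rw [mul_zero] at e1
      rw [show 2 * a + 2 * (a + b) = 2 * (a + (a + b)) by ring]
      exact e1
    have h6a : Real.sin (6 * a) = 0 := by
      rw [← haeb] at hsin6
      convert hsin6 using 2; ring
    have hshift : Real.sin (6 * a - π) = 0 := by
      rw [Real.sin_sub_pi, h6a, neg_zero]
    have h6 : 6 * a = π := by
      have := (Real.sin_eq_zero_iff_of_lt_of_lt (x := 6 * a - π)
        (by linarith) (by nlinarith [haeb])).1 hshift
      linarith
    have hx1 : x₁ = π / 6 := by
      simp only [ha_def, hb_def] at haeb h6 ⊢; linarith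
    have hx2 : x₂ = 0 := by
      simp only [ha_def, hb_def] at haeb h6 ⊢; linarith
    exact ⟨hx1, hx2, by linarith⟩
  · rintro ⟨h1, h2, h3⟩
    subst h1 h2 h3
    have k1 : Real.cot (π / 3) + Real.cot (2 * π / 3) = 0 := by
      have hc1 : Real.cos (π / 3) = 1 / 2 := Real.cos_pi_div_three
      have hs1 : Real.sin (π / 3) = Real.sqrt 3 / 2 := Real.sin_pi_div_three
      have hc2 : Real.cos (2 * π / 3) = -(1 / 2) := by
        have : (2 : ℝ) * π / 3 = π - π / 3 := by ring
        rw [this, Real.cos_pi_sub, hc1]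
      have hs2 : Real.sin (2 * π / 3) = Real.sqrt 3 / 2 := by
        have : (2 : ℝ) * π / 3 = π - π / 3 := by ring
        rw [this, Real.sin_pi_sub, hs1]
      rw [real_cot_eq, real_cot_eq, hc1, hs1, hc2, hs2]
      ring
    have e1 : 2 * (π / 6 - 0) = π / 3 := by ring
    have e2 : 2 * (π / 6 - -(π / 6)) = 2 * π / 3 := by ring
    have e3 : 2 * ((0 : ℝ) - π / 6) = -(π / 3) := by ring
    have e4 : 2 * ((0 : ℝ) - -(π / 6)) = π / 3 := by ring
    have e5 : 2 * (-(π / 6) - π / 6) = -(2 * π / 3) := by ring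
    have e6 : 2 * (-(π / 6) - (0 : ℝ)) = -(π / 3) := by ring
    rw [e1, e2, e3, e4, e5, e6]
    simp only [cot_neg']
    refine ⟨k1, by linarith, by linarith⟩
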